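/- arXiv:2403.02957 — 2 statements merged into one kernel-verified Lean document; each statement's English description precedes it below -/
import Mathlib

section
/- Let β ∈ (0,1) and t ≥ 1 an integer. Then β·√((1−β)^{t−1}) / (1 − (1−β)^t) ≤ (1 + tβ) / (t·(1 + ((t−1)/2)·β)) ≤ 2/t. -/
lemma aux_pow_bound (β : ℝ) (h0 : 0 ≤ β) (h1 : β ≤ 1) :
    ∀ n : ℕ, (1 - β) ^ n * (1 + ((n : ℝ) / 2) * β) ^ 2 ≤ 1 := by
  intro n
  induction n with
  | zero => norm_num
  | succ n ih =>
    have hc : (0:ℝ) ≤ (n : ℝ) := Nat.cast_nonneg n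
    have hp : (0:ℝ) ≤ (1 - β) ^ n := pow_nonneg (by linarith) n
    have key : (1 - β) * (1 + (((n : ℝ) + 1) / 2) * β) ^ 2 ≤ (1 + ((n : ℝ) / 2) * β) ^ 2 := by
      nlinarith [sq_nonneg β, sq_nonneg ((n:ℝ)*β), mul_nonneg hc h0, sq_nonneg ((n:ℝ)*β*β),
        mul_nonneg (mul_nonneg hc h0) h0, mul_nonneg (mul_nonneg (mul_nonneg hc hc) h0) h0]
    calc (1 - β) ^ (n + 1) * (1 + ((n + 1 : ℕ) : ℝ) / 2 * β) ^ 2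
        = (1 - β) ^ n * ((1 - β) * (1 + (((n : ℝ) + 1) / 2) * β) ^ 2) := by
          push_cast; ring
      _ ≤ (1 - β) ^ n * (1 + ((n : ℝ) / 2) * β) ^ 2 := by
          exact mul_le_mul_of_nonneg_left key hp
      _ ≤ 1 := ih

/-- Key bound combining the Bernoulli variant inequality:
`β·√((1−β)^{t−1}) / (1 − (1−β)^t) ≤ (1 + tβ)/(t·(1 + ((t−1)/2)·β)) ≤ 2/t`. -/
theorem beta_sqrt_ratio_bound (β : ℝ) (hβ0 : 0 < β) (hβ1 : β < 1)
    (t : ℕ) (ht : 1 ≤ t) :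
    β * Real.sqrt ((1 - β) ^ (t - 1)) / (1 - (1 - β) ^ t) ≤
        (1 + (t : ℝ) * β) / ((t : ℝ) * (1 + (((t : ℝ) - 1) / 2) * β)) ∧
      (1 + (t : ℝ) * β) / ((t : ℝ) * (1 + (((t : ℝ) - 1) / 2) * β)) ≤ 2 / (t : ℝ) := by
  have hb0 : (0:ℝ) ≤ β := le_of_lt hβ0
  have hb1 : β ≤ 1 := le_of_lt hβ1
  have hs : (1:ℝ) ≤ (t:ℝ) := by exact_mod_cast ht
  have hst : (0:ℝ) < (t:ℝ) := lt_of_lt_of_le one_pos hs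
  have hm : (0:ℝ) ≤ ((t:ℝ) - 1) / 2 := by linarith
  set m : ℝ := ((t:ℝ) - 1) / 2 with hmdef
  have hmp : (0:ℝ) < 1 + m * β := by nlinarith
  -- cast of t-1
  have hcast : ((t - 1 : ℕ) : ℝ) = (t:ℝ) - 1 := by
    rw [Nat.cast_sub ht]; norm_num
  -- sqrt bound
  have haux := aux_pow_bound β hb0 hb1 (t - 1)
  rw [hcast] at haux
  have hsq : Real.sqrt ((1 - β) ^ (t - 1)) ≤ 1 / (1 + m * β) := by
    rw [show (1:ℝ) / (1 + m * β) = Real.sqrt ((1 / (1 + m * β)) ^ 2) by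
      rw [Real.sqrt_sq (by positivity)]]
    apply Real.sqrt_le_sqrt
    rw [div_pow, one_pow, le_div_iff₀ (by positivity)]
    calc (1 - β) ^ (t - 1) * (1 + m * β) ^ 2
        = (1 - β) ^ (t - 1) * (1 + (((t:ℝ) - 1) / 2) * β) ^ 2 := by rw [hmdef]
      _ ≤ 1 := haux
  -- denominator bound
  have hbern : (1 - β) ^ t * (1 + (t:ℝ) * β) ≤ 1 := by
    have h2 := aux_pow_bound β hb0 hb1 t
    have hp : (0:ℝ) ≤ (1 - β) ^ t := pow_nonneg (by linarith) t
    nlinarith [sq_nonneg ((t:ℝ) * β), mul_nonneg hp (sq_nonneg ((t:ℝ)*β/2))]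
  have htb : (0:ℝ) < 1 + (t:ℝ) * β := by nlinarith
  have hden : (t:ℝ) * β / (1 + (t:ℝ) * β) ≤ 1 - (1 - β) ^ t := by
    rw [div_le_iff₀ htb]
    nlinarith
  have hdenpos : (0:ℝ) < (t:ℝ) * β / (1 + (t:ℝ) * β) := by positivity
  have hdpos : (0:ℝ) < 1 - (1 - β) ^ t := lt_of_lt_of_le hdenpos hden
  constructor
  · have hnum : β * Real.sqrt ((1 - β) ^ (t - 1)) ≤ β * (1 / (1 + m * β)) :=
      mul_le_mul_of_nonneg_left hsq hb0
    have hnum0 : (0:ℝ) ≤ β * (1 / (1 + m * β)) := by positivity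
    calc β * Real.sqrt ((1 - β) ^ (t - 1)) / (1 - (1 - β) ^ t)
        ≤ (β * (1 / (1 + m * β))) / ((t:ℝ) * β / (1 + (t:ℝ) * β)) :=
          div_le_div₀ hnum0 hnum hdenpos hden
      _ = (1 + (t:ℝ) * β) / ((t:ℝ) * (1 + m * β)) := by
          field_simp
  · rw [div_le_div_iff₀ (by positivity) hst]
    nlinarith
end

section
/- Let α_1 ∈ (0,1), and for t ≥ 2 define L_{2:t} = (1−α_1)√(ᾱ_t)/((1−ᾱ_t)√(α_1)) with ᾱ_t = ∏_{i=1}^t α_i and α_1 ≥ α_2 ≥ ⋯. Then with β_1 = 1−α_1, L_{2:t} ≤ β_1·√((1−β_1)^{t−1})/(1 − (1−β_1)^t) ≤ 2/t. -/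
lemma aux_decay (β : ℝ) (m : ℕ) (hβ0 : 0 < β) (hβ1 : β < 1) (hm1 : 1 ≤ m) :
    β * Real.sqrt ((1 - β) ^ m) / (1 - (1 - β) ^ (m + 1)) ≤ 2 / ((m : ℝ) + 1) := by
  have ha0 : (0:ℝ) < 1 - β := by linarith
  have ha1 : 1 - β < 1 := by linarith
  have hm0 : (1:ℝ) ≤ (m : ℝ) := by exact_mod_cast hm1
  have ht0 : (0:ℝ) < (m : ℝ) + 1 := by linarith
  have h1c : (0:ℝ) < 1 + (m : ℝ) * β / 2 := by positivity
  have haexp : 1 - β ≤ Real.exp (-β) := by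
    have := Real.add_one_le_exp (-β); linarith
  have h1 : (1 - β) ^ m ≤ Real.exp (-((m : ℝ) * β)) := by
    calc (1 - β) ^ m ≤ Real.exp (-β) ^ m := pow_le_pow_left₀ ha0.le haexp m
      _ = Real.exp (-((m : ℝ) * β)) := by rw [← Real.exp_nat_mul]; ring_nf
  have h2 : (1 + (m : ℝ) * β / 2) ^ 2 ≤ Real.exp ((m : ℝ) * β) := by
    have h := Real.add_one_le_exp ((m : ℝ) * β / 2)
    calc (1 + (m : ℝ) * β / 2) ^ 2 ≤ Real.exp ((m : ℝ) * β / 2) ^ 2 := by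
          nlinarith [Real.exp_pos ((m : ℝ) * β / 2)]
      _ = Real.exp ((m : ℝ) * β) := by
          rw [← Real.exp_nat_mul]; push_cast; ring_nf
  have h3 : (1 - β) ^ m * (1 + (m : ℝ) * β / 2) ^ 2 ≤ 1 := by
    calc (1 - β) ^ m * (1 + (m : ℝ) * β / 2) ^ 2
        ≤ Real.exp (-((m:ℝ)*β)) * Real.exp ((m:ℝ)*β) :=
          mul_le_mul h1 h2 (by positivity) (Real.exp_pos _).le
      _ = 1 := by rw [← Real.exp_add]; ring_nf; exact Real.exp_zero
  have hsm : Real.sqrt ((1 - β) ^ m) ≤ 1 / (1 + (m : ℝ) * β / 2) := by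
    rw [show (1:ℝ)/(1 + (m : ℝ) * β / 2)
        = Real.sqrt ((1/(1 + (m : ℝ) * β / 2))^2) from
      (Real.sqrt_sq (by positivity)).symm]
    apply Real.sqrt_le_sqrt
    rw [div_pow, one_pow, le_div_iff₀ (by positivity)]
    linarith [h3]
  have hbern : 1 + ((m : ℝ) + 1) * β ≤ (1 + β) ^ (m + 1) := by
    have := one_add_mul_le_pow (a := β) (by linarith) (m + 1)
    push_cast at this ⊢; linarith
  have haβ : (1 - β) * (1 + β) ≤ 1 := by nlinarith
  have hat0 : (0:ℝ) < (1 - β) ^ (m + 1) := pow_pos ha0 _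
  have h4 : (1 - β) ^ (m + 1) * (1 + ((m : ℝ) + 1) * β) ≤ 1 := by
    calc (1 - β) ^ (m + 1) * (1 + ((m : ℝ) + 1) * β)
        ≤ (1 - β) ^ (m + 1) * (1 + β) ^ (m + 1) :=
          mul_le_mul_of_nonneg_left hbern hat0.le
      _ = ((1 - β) * (1 + β)) ^ (m + 1) := (mul_pow _ _ _).symm
      _ ≤ 1 ^ (m + 1) := pow_le_pow_left₀ (by positivity) haβ _
      _ = 1 := one_pow _
  have h5 : ((m : ℝ) + 1) * β / (1 + ((m : ℝ) + 1) * β) ≤ 1 - (1 - β) ^ (m + 1) := by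
    rw [div_le_iff₀ (by positivity)]
    nlinarith
  have hden : (0:ℝ) < ((m : ℝ) + 1) * β / (1 + ((m : ℝ) + 1) * β) := by positivity
  have step : β * Real.sqrt ((1 - β) ^ m) / (1 - (1 - β) ^ (m + 1)) ≤
      β * (1 / (1 + (m : ℝ) * β / 2)) /
        (((m : ℝ) + 1) * β / (1 + ((m : ℝ) + 1) * β)) :=
    div_le_div₀ (by positivity) (mul_le_mul_of_nonneg_left hsm hβ0.le) hden h5
  have heq : β * (1 / (1 + (m : ℝ) * β / 2)) /
      (((m : ℝ) + 1) * β / (1 + ((m : ℝ) + 1) * β))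
      = (1 + ((m : ℝ) + 1) * β) / ((1 + (m : ℝ) * β / 2) * ((m : ℝ) + 1)) := by
    field_simp
  have final : (1 + ((m : ℝ) + 1) * β) / ((1 + (m : ℝ) * β / 2) * ((m : ℝ) + 1))
      ≤ 2 / ((m : ℝ) + 1) := by
    rw [div_le_div_iff₀ (by positivity) ht0]
    nlinarith
  calc β * Real.sqrt ((1 - β) ^ m) / (1 - (1 - β) ^ (m + 1)) ≤ _ := step
    _ = _ := heq
    _ ≤ 2 / ((m : ℝ) + 1) := final

/-- The concatenated Lipschitz constant `L_{2:t} = (1−α₁)√(ᾱ_t)/((1−ᾱ_t)√α₁)`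
satisfies `L_{2:t} ≤ β₁·√((1−β₁)^{t−1})/(1 − (1−β₁)^t) ≤ 2/t`, where `β₁ = 1 − α₁`. -/
theorem concatenated_lipschitz_decay (T : ℕ) (α : ℕ → ℝ)
    (hα : ∀ i, 1 ≤ i → i ≤ T → 0 < α i ∧ α i < 1)
    (hmono : ∀ i j, 1 ≤ i → i ≤ j → j ≤ T → α j ≤ α i)
    (abar : ℕ → ℝ)
    (habar : ∀ t, abar t = ∏ i ∈ Finset.Icc 1 t, α i)
    (t : ℕ) (ht2 : 2 ≤ t) (htT : t ≤ T) :
    (1 - α 1) * Real.sqrt (abar t) / ((1 - abar t) * Real.sqrt (α 1)) ≤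
        (1 - α 1) * Real.sqrt ((1 - (1 - α 1)) ^ (t - 1)) /
          (1 - (1 - (1 - α 1)) ^ t) ∧
      (1 - α 1) * Real.sqrt ((1 - (1 - α 1)) ^ (t - 1)) /
          (1 - (1 - (1 - α 1)) ^ t) ≤ 2 / (t : ℝ) := by
  have h1T : 1 ≤ T := le_trans (by omega) htT
  obtain ⟨ha0, ha1⟩ := hα 1 le_rfl h1T
  set a := α 1 with ha
  rw [sub_sub_cancel]
  have hat1 : a ^ t < 1 := pow_lt_one₀ ha0.le ha1 (by omega)
  have hat0 : 0 < a ^ t := pow_pos ha0 t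
  have hm : t - 1 + 1 = t := by omega
  have habpos : 0 < abar t := by
    rw [habar]
    exact Finset.prod_pos fun i hi => (hα i (Finset.mem_Icc.mp hi).1
      (le_trans (Finset.mem_Icc.mp hi).2 htT)).1
  have habub : abar t ≤ a ^ t := by
    rw [habar]
    calc ∏ i ∈ Finset.Icc 1 t, α i ≤ ∏ _i ∈ Finset.Icc 1 t, a := by
          apply Finset.prod_le_prod
          · intro i hi
            exact (hα i (Finset.mem_Icc.mp hi).1
              (le_trans (Finset.mem_Icc.mp hi).2 htT)).1.le
          · intro i hi
            exact hmono 1 i le_rfl (Finset.mem_Icc.mp hi).1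
              (le_trans (Finset.mem_Icc.mp hi).2 htT)
      _ = a ^ t := by simp [Finset.prod_const, Nat.card_Icc]
  have hsqa : (0:ℝ) < Real.sqrt a := Real.sqrt_pos.mpr ha0
  have hsplit : Real.sqrt (a ^ t) = Real.sqrt (a ^ (t - 1)) * Real.sqrt a := by
    rw [← Real.sqrt_mul (pow_nonneg ha0.le _), ← pow_succ, hm]
  constructor
  · have key : (1 - a) * Real.sqrt (abar t) / ((1 - abar t) * Real.sqrt a) ≤
        (1 - a) * (Real.sqrt (a ^ (t - 1)) * Real.sqrt a) /
          ((1 - a ^ t) * Real.sqrt a) := by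
      apply div_le_div₀ (mul_nonneg (by linarith) (by positivity))
      · rw [← hsplit]
        exact mul_le_mul_of_nonneg_left (Real.sqrt_le_sqrt habub) (by linarith)
      · exact mul_pos (by linarith) hsqa
      · exact mul_le_mul_of_nonneg_right (by linarith) hsqa.le
    calc (1 - a) * Real.sqrt (abar t) / ((1 - abar t) * Real.sqrt a) ≤
          (1 - a) * (Real.sqrt (a ^ (t - 1)) * Real.sqrt a) /
            ((1 - a ^ t) * Real.sqrt a) := key
      _ = (1 - a) * Real.sqrt (a ^ (t - 1)) / (1 - a ^ t) := by
          rw [← mul_assoc, mul_div_mul_right _ _ (ne_of_gt hsqa)]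
  · obtain ⟨m, rfl⟩ : ∃ m, t = m + 1 := ⟨t - 1, by omega⟩
    have hgoal := aux_decay (1 - a) m (by linarith) (by linarith) (by omega)
    simpa [Nat.add_sub_cancel, sub_sub_cancel] using hgoal
end
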